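/- (Deterministic restart property underlying Theorem 3.) Let A be a real n×n matrix, B a real n×p matrix, u : ℝ → ℝᵖ, and let ξ : ℝ → ℝⁿ be differentiable with ξ'(t) = Aξ(t) + Bu(t) for all t. Let M be a real symmetric positive definite n×n matrix and μ ∈ ℝ with AᵀM + MA + μM ⪯ 0. Fix t₁ ∈ ℝ, a shift σ ∈ ℝ, and a restart state x' ∈ ℝⁿ with (x' − ξ(t₁ + σ))ᵀ M (x' − ξ(t₁ + σ)) ≤ r for some r ≥ 0. Let ζ : ℝ → ℝⁿ be differentiable with ζ(t₁) = x' and ζ'(t) = Aζ(t) + Bu(t + σ) for all t ≥ t₁ (the dynamics driven by the σ-time-shifted input). Then for all t ≥ t₁: (ζ(t) − ξ(t + σ))ᵀ M (ζ(t) − ξ(t + σ)) ≤ r e^{−μ(t − t₁)}. -/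

import Mathlib

open Matrix

lemma quad_hasDerivAt {n : ℕ} (M : Matrix (Fin n) (Fin n) ℝ) (e : ℝ → Fin n → ℝ)
    (d : Fin n → ℝ) (s : ℝ) (he : HasDerivAt e d s) :
    HasDerivAt (fun t => e t ⬝ᵥ M.mulVec (e t))
      (d ⬝ᵥ M.mulVec (e s) + e s ⬝ᵥ M.mulVec d) s := by
  have hcoord : ∀ i, HasDerivAt (fun t => e t i) (d i) s := fun i => hasDerivAt_pi.1 he i
  have hinner : ∀ i, HasDerivAt (fun t => ∑ j, M i j * e t j) (∑ j, M i j * d j) s :=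
    fun i => HasDerivAt.fun_sum (fun j _ => (hcoord j).const_mul (M i j))
  have h : HasDerivAt (fun t => ∑ i, e t i * ∑ j, M i j * e t j)
      (∑ i, (d i * ∑ j, M i j * e s j + e s i * ∑ j, M i j * d j)) s :=
    HasDerivAt.fun_sum (fun i _ => (hcoord i).mul (hinner i))
  simpa [dotProduct, Matrix.mulVec, Finset.sum_add_distrib] using h

/-- Deterministic restart property underlying Theorem 3: if at time t₁ the state is perturbed
to x' inside the r-ellipsoid around the nominal state ξ(t₁ + σ), and the dynamics are restarted
from x' with the σ-time-shifted input, then the deviation from the shifted nominal trajectory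
decays: (ζ(t) − ξ(t + σ))ᵀ M (ζ(t) − ξ(t + σ)) ≤ r e^{−μ(t − t₁)} for all t ≥ t₁. -/
theorem stmt_12 {n p : ℕ} (A : Matrix (Fin n) (Fin n) ℝ) (B : Matrix (Fin n) (Fin p) ℝ)
    (u : ℝ → Fin p → ℝ) (ξ : ℝ → Fin n → ℝ)
    (hξ : ∀ t : ℝ, HasDerivAt ξ (A.mulVec (ξ t) + B.mulVec (u t)) t)
    (M : Matrix (Fin n) (Fin n) ℝ) (hMsym : M = Mᵀ)
    (hMpd : ∀ v : Fin n → ℝ, v ≠ 0 → 0 < v ⬝ᵥ M.mulVec v) (μ : ℝ)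
    (hLMI : ∀ v : Fin n → ℝ, v ⬝ᵥ (Aᵀ * M + M * A + μ • M).mulVec v ≤ 0)
    (t₁ σ : ℝ) (x' : Fin n → ℝ) (r : ℝ) (hr : 0 ≤ r)
    (hx' : (x' - ξ (t₁ + σ)) ⬝ᵥ M.mulVec (x' - ξ (t₁ + σ)) ≤ r)
    (ζ : ℝ → Fin n → ℝ) (hζ0 : ζ t₁ = x')
    (hζ : ∀ t : ℝ, t₁ ≤ t → HasDerivAt ζ (A.mulVec (ζ t) + B.mulVec (u (t + σ))) t) :
    ∀ t : ℝ, t₁ ≤ t →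
      (ζ t - ξ (t + σ)) ⬝ᵥ M.mulVec (ζ t - ξ (t + σ)) ≤ r * Real.exp (-μ * (t - t₁)) := by
  set e : ℝ → Fin n → ℝ := fun t => ζ t - ξ (t + σ) with he_def
  -- derivative of the error
  have he : ∀ s : ℝ, t₁ ≤ s → HasDerivAt e (A.mulVec (e s)) s := by
    intro s hs
    have hshift : HasDerivAt (fun t => ξ (t + σ))
        (A.mulVec (ξ (s + σ)) + B.mulVec (u (s + σ))) s := by
      have := (hξ (s + σ)).scomp s ((hasDerivAt_id s).add_const σ)
      simpa [Function.comp_def] using this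
    have := (hζ s hs).sub hshift
    have heq : A.mulVec (ζ s) + B.mulVec (u (s + σ)) -
        (A.mulVec (ξ (s + σ)) + B.mulVec (u (s + σ))) = A.mulVec (e s) := by
      simp [he_def, Matrix.mulVec_sub]
    rwa [heq] at this
  -- V and its derivative bound
  set V : ℝ → ℝ := fun t => e t ⬝ᵥ M.mulVec (e t) with hV_def
  have hVd : ∀ s : ℝ, t₁ ≤ s → HasDerivAt V
      (A.mulVec (e s) ⬝ᵥ M.mulVec (e s) + e s ⬝ᵥ M.mulVec (A.mulVec (e s))) s :=
    fun s hs => quad_hasDerivAt M e _ s (he s hs)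
  have hDle : ∀ s : ℝ,
      A.mulVec (e s) ⬝ᵥ M.mulVec (e s) + e s ⬝ᵥ M.mulVec (A.mulVec (e s)) ≤ -μ * V s := by
    intro s
    have h1 : A.mulVec (e s) ⬝ᵥ M.mulVec (e s) = e s ⬝ᵥ (Aᵀ * M).mulVec (e s) := by
      rw [← Matrix.mulVec_mulVec, Matrix.dotProduct_mulVec (e s), Matrix.vecMul_transpose]
    have h2 : e s ⬝ᵥ M.mulVec (A.mulVec (e s)) = e s ⬝ᵥ (M * A).mulVec (e s) := by
      rw [Matrix.mulVec_mulVec]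
    have h3 := hLMI (e s)
    rw [Matrix.add_mulVec, Matrix.add_mulVec, dotProduct_add, dotProduct_add,
      Matrix.smul_mulVec, dotProduct_smul] at h3
    rw [h1, h2]
    show _ ≤ -μ * (e s ⬝ᵥ M.mulVec (e s))
    rw [smul_eq_mul] at h3; linarith [h3]
  -- W and its monotonicity
  set W : ℝ → ℝ := fun t => V t * Real.exp (μ * (t - t₁)) with hW_def
  have hWd : ∀ s : ℝ, t₁ ≤ s → HasDerivAt W
      ((A.mulVec (e s) ⬝ᵥ M.mulVec (e s) + e s ⬝ᵥ M.mulVec (A.mulVec (e s))) *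
        Real.exp (μ * (s - t₁)) + V s * (Real.exp (μ * (s - t₁)) * μ)) s := by
    intro s hs
    have hexp : HasDerivAt (fun t => Real.exp (μ * (t - t₁)))
        (Real.exp (μ * (s - t₁)) * μ) s := by
      have := (((hasDerivAt_id s).sub_const t₁).const_mul μ).exp
      simpa [mul_comm] using this
    exact (hVd s hs).mul hexp
  have hanti : AntitoneOn W (Set.Ici t₁) := by
    apply antitoneOn_of_deriv_nonpos (convex_Ici t₁)
    · exact fun s hs => ((hWd s hs).continuousAt).continuousWithinAt
    · intro s hs
      rw [interior_Ici] at hs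
      exact (hWd s (le_of_lt hs)).differentiableAt.differentiableWithinAt
    · intro s hs
      rw [interior_Ici] at hs
      rw [(hWd s (le_of_lt hs)).deriv]
      have hE : 0 < Real.exp (μ * (s - t₁)) := Real.exp_pos _
      have := hDle s
      nlinarith
  intro t ht
  have hWt : W t ≤ W t₁ := hanti Set.self_mem_Ici ht ht
  have hWt₁ : W t₁ = V t₁ := by simp [hW_def]
  have hVt₁ : V t₁ ≤ r := by
    simp only [hV_def, he_def, hζ0]
    exact hx'
  have hE : 0 < Real.exp (μ * (t - t₁)) := Real.exp_pos _
  have key : V t * Real.exp (μ * (t - t₁)) ≤ r := by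
    calc V t * Real.exp (μ * (t - t₁)) = W t := rfl
    _ ≤ W t₁ := hWt
    _ = V t₁ := hWt₁
    _ ≤ r := hVt₁
  have : V t ≤ r * Real.exp (-μ * (t - t₁)) := by
    rw [neg_mul, Real.exp_neg, mul_comm r, ← div_eq_inv_mul, le_div_iff₀ hE]
    linarith [key]
  exact this
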